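/- Let A be a finite subset of an abelian group G and let k satisfy 2 ≤ k ≤ |A| − 2. Then |k∧A| ≥ |A|, unless k ∈ {2, |A| − 2} and A is a coset of an elementary 2-subgroup of G. -/

import Mathlib

open Finset Pointwise

/-- The set of sums of `k` distinct elements of `A`. -/
def nSum {G : Type*} [AddCommGroup G] [DecidableEq G] (k : ℕ) (A : Finset G) : Finset G :=
  (A.powersetCard k).image fun B => B.sum id

/-- `A` is a coset of an elementary 2-subgroup of `G`. -/
def Is2Coset {G : Type*} [AddCommGroup G] (A : Finset G) : Prop :=
  ∃ (H : AddSubgroup G) (g : G), (∀ x ∈ H, x + x = 0) ∧ (A : Set G) = g +ᵥ (H : Set G)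

section Helpers

variable {G : Type*} [AddCommGroup G] [DecidableEq G]

lemma mem_nSum {k : ℕ} {A : Finset G} {z : G} :
    z ∈ nSum k A ↔ ∃ B : Finset G, B ⊆ A ∧ B.card = k ∧ B.sum id = z := by
  unfold nSum
  simp only [Finset.mem_image, Finset.mem_powersetCard]
  constructor
  · rintro ⟨B, ⟨h1, h2⟩, h3⟩; exact ⟨B, h1, h2, h3⟩
  · rintro ⟨B, h1, h2, h3⟩; exact ⟨B, ⟨h1, h2⟩, h3⟩

/-- The swap bound: if `C ⊆ A` has `k` elements, `x ∈ A \ C`, `y ∈ C`, and the only way to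
write `x + y = b' + c'` with `b' ∈ A \ C`, `c' ∈ C` is `(x, y)`, then `|nSum k A| ≥ |A|`. -/
lemma swap_bound {A C : Finset G} {k : ℕ} (hC : C ⊆ A) (hCk : C.card = k)
    {x y : G} (hx : x ∈ A) (hxC : x ∉ C) (hy : y ∈ C)
    (huniq : ∀ b' ∈ A, b' ∉ C → ∀ c' ∈ C, b' + c' = x + y → b' = x ∧ c' = y) :
    A.card ≤ (nSum k A).card := by
  classical
  set s := C.sum id with hs
  have hkpos : 1 ≤ k := by
    rw [← hCk]; exact card_pos.2 ⟨y, hy⟩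
  have hkA : k ≤ A.card := by rw [← hCk]; exact card_le_card hC
  have hmem : ∀ b ∈ A, b ∉ C → ∀ c ∈ C, s - c + b ∈ nSum k A := by
    intro b hb hbC c hc
    refine mem_nSum.2 ⟨insert b (C.erase c), ?_, ?_, ?_⟩
    · intro w hw
      rcases Finset.mem_insert.1 hw with rfl | hw
      · exact hb
      · exact hC (Finset.mem_of_mem_erase hw)
    · rw [Finset.card_insert_of_notMem (fun h => hbC (Finset.mem_of_mem_erase h)),
        Finset.card_erase_of_mem hc, hCk]
      omega
    · rw [Finset.sum_insert (fun h => hbC (Finset.mem_of_mem_erase h)),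
        Finset.sum_erase_eq_sub hc, ← hs]
      simp only [id_eq]
      abel
  set B := A \ C with hB
  have hBcard : B.card = A.card - k := by rw [hB, card_sdiff_of_subset hC, hCk]
  set F1 := B.image (fun b => s - y + b) with hF1
  set F2 := C.image (fun c => s - c + x) with hF2
  have h1 : F1.card = A.card - k := by
    rw [hF1, card_image_of_injective _ (add_right_injective (s - y)), hBcard]
  have hinj2 : Function.Injective (fun c : G => s - c + x) := by
    intro c1 c2 h
    have h' : s - c1 + x = s - c2 + x := h
    have h0 : (s - c1 + x) - (s - c2 + x) = 0 := by rw [h', sub_self]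
    have h1 : (s - c1 + x) - (s - c2 + x) = c2 - c1 := by abel
    rw [h1] at h0
    exact (sub_eq_zero.1 h0).symm
  have h2 : F2.card = k := by
    rw [hF2, card_image_of_injective _ hinj2, hCk]
  have hsub : F1 ∪ F2 ⊆ nSum k A := by
    intro w hw
    rcases mem_union.1 hw with hw | hw
    · obtain ⟨b, hb, rfl⟩ := mem_image.1 hw
      obtain ⟨hbA, hbC⟩ := mem_sdiff.1 hb
      exact hmem b hbA hbC y hy
    · obtain ⟨c, hc, rfl⟩ := mem_image.1 hw
      exact hmem x hx hxC c hc
  have hinter : F1 ∩ F2 ⊆ {s - y + x} := by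
    intro w hw
    obtain ⟨hw1, hw2⟩ := mem_inter.1 hw
    obtain ⟨b, hb, hbw⟩ := mem_image.1 hw1
    obtain ⟨c, hc, hcw⟩ := mem_image.1 hw2
    obtain ⟨hbA, hbC⟩ := mem_sdiff.1 hb
    have heq : b + c = x + y := by
      have hE : s - y + b = s - c + x := by rw [hbw, hcw]
      have h0 : (s - y + b) - (s - c + x) = 0 := by rw [hE, sub_self]
      have h1 : (s - y + b) - (s - c + x) = (b + c) - (x + y) := by abel
      rw [h1] at h0
      exact sub_eq_zero.1 h0
    obtain ⟨rfl, rfl⟩ := huniq b hbA hbC c hc heq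
    rw [mem_singleton, ← hbw]
  have hscup : s ∉ F1 ∪ F2 := by
    intro hw
    rcases mem_union.1 hw with hw | hw
    · obtain ⟨b, hb, hbw⟩ := mem_image.1 hw
      obtain ⟨hbA, hbC⟩ := mem_sdiff.1 hb
      apply hbC
      have h0 : (s - y + b) - s = 0 := by rw [hbw, sub_self]
      have h1 : (s - y + b) - s = b - y := by abel
      rw [h1] at h0
      rw [sub_eq_zero.1 h0]
      exact hy
    · obtain ⟨c, hc, hcw⟩ := mem_image.1 hw
      apply hxC
      have h0 : (s - c + x) - s = 0 := by rw [hcw, sub_self]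
      have h1 : (s - c + x) - s = x - c := by abel
      rw [h1] at h0
      rw [sub_eq_zero.1 h0]
      exact hc
  have hunion : A.card - 1 ≤ (F1 ∪ F2).card := by
    have hii : (F1 ∩ F2).card ≤ 1 := by
      have := card_le_card hinter
      simpa using this
    have := card_union_add_card_inter F1 F2
    omega
  have hins : A.card ≤ (insert s (F1 ∪ F2)).card := by
    rw [card_insert_of_notMem hscup]
    omega
  refine le_trans hins (card_le_card ?_)
  intro w hw
  rcases mem_insert.1 hw with rfl | hw
  · exact mem_nSum.2 ⟨C, hC, hCk, rfl⟩
  · exact hsub hw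

/-- Selecting a fixed-point-free-involution-closed subset of any even size. -/
lemma pair_select (ι : G → G) : ∀ (a : ℕ) (P : Finset G),
    (∀ u ∈ P, ι u ∈ P) → (∀ u ∈ P, ι (ι u) = u) → (∀ u ∈ P, ι u ≠ u) →
    2 * a ≤ P.card → ∃ Q, Q ⊆ P ∧ Q.card = 2 * a ∧ ∀ u ∈ Q, ι u ∈ Q := by
  intro a
  induction a with
  | zero =>
    intro P _ _ _ _
    exact ⟨∅, empty_subset _, by simp, fun u hu => absurd hu (notMem_empty u)⟩
  | succ n ih =>
    intro P hmem hinv hne hcard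
    obtain ⟨u, hu⟩ : P.Nonempty := card_pos.1 (by omega)
    have hιu : ι u ∈ P := hmem u hu
    have hιuu : ι u ≠ u := hne u hu
    set P2 := (P.erase u).erase (ι u) with hP2
    have hP2sub : P2 ⊆ P := (erase_subset _ _).trans (erase_subset _ _)
    have hP2mem : ∀ v, v ∈ P2 ↔ v ∈ P ∧ v ≠ u ∧ v ≠ ι u := by
      intro v; rw [hP2, mem_erase, mem_erase]; tauto
    have hP2card : P2.card = P.card - 2 := by
      rw [hP2, card_erase_of_mem (mem_erase.2 ⟨hιuu, hιu⟩), card_erase_of_mem hu]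
      omega
    obtain ⟨Q2, hQ2sub, hQ2card, hQ2mem⟩ := ih P2
      (by
        intro v hv
        obtain ⟨hvP, hvu, hvιu⟩ := (hP2mem v).1 hv
        refine (hP2mem (ι v)).2 ⟨hmem v hvP, ?_, ?_⟩
        · intro h
          apply hvιu
          rw [← hinv v hvP, h]
        · intro h
          apply hvu
          rw [← hinv v hvP, h, hinv u hu])
      (fun v hv => hinv v (hP2sub hv))
      (fun v hv => hne v (hP2sub hv))
      (by omega)
    have hιuQ2 : ι u ∉ Q2 := fun h => ((hP2mem (ι u)).1 (hQ2sub h)).2.2 rfl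
    have huQ2 : u ∉ insert (ι u) Q2 := by
      rw [mem_insert]
      rintro (h | h)
      · exact hιuu h.symm
      · exact ((hP2mem u).1 (hQ2sub h)).2.1 rfl
    refine ⟨insert u (insert (ι u) Q2), ?_, ?_, ?_⟩
    · exact insert_subset hu (insert_subset hιu (hQ2sub.trans hP2sub))
    · rw [card_insert_of_notMem huQ2, card_insert_of_notMem hιuQ2, hQ2card]
      omega
    · intro v hv
      rcases mem_insert.1 hv with rfl | hv
      · exact mem_insert_of_mem (mem_insert_self _ _)
      rcases mem_insert.1 hv with rfl | hv2
      · rw [hinv u hu]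
        exact mem_insert_self _ _
      · exact mem_insert_of_mem (mem_insert_of_mem (hQ2mem v hv2))

/-- Existence of an involution-closed subset `D` of `A \ {x,y}` of size `m`. -/
lemma exists_D {A : Finset G} {x y : G} (hx : x ∈ A) (hy : y ∈ A) (hxy : x ≠ y)
    {m : ℕ} (hm : m + 3 ≤ A.card)
    (hside : (∃ u ∈ A \ {x, y}, ¬(x + y - u ∈ A \ {x, y} ∧ x + y - u ≠ u)) ∨ Even m) :
    ∃ D, D ⊆ A \ {x, y} ∧ D.card = m ∧
      (∀ u ∈ D, x + y - u ∈ A \ {x, y} → x + y - u ∈ D) := by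
  classical
  set U := A \ {x, y} with hU
  have hxyA : ({x, y} : Finset G) ⊆ A := by
    intro v hv
    rcases mem_insert.1 hv with rfl | hv
    · exact hx
    · rw [mem_singleton.1 hv]; exact hy
  have hUcard : U.card = A.card - 2 := by
    rw [hU, card_sdiff_of_subset hxyA, card_pair hxy]
  set Pi := U.filter (fun u => x + y - u ∈ U ∧ x + y - u ≠ u) with hPi
  set Phi := U.filter (fun u => ¬(x + y - u ∈ U ∧ x + y - u ≠ u)) with hPhi
  have hsplit : Pi.card + Phi.card = U.card := by
    rw [hPi, hPhi]
    exact card_filter_add_card_filter_not _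
  have hPimem : ∀ u ∈ Pi, x + y - u ∈ Pi := by
    intro u hu
    obtain ⟨huU, hp⟩ := mem_filter.1 hu
    refine mem_filter.2 ⟨hp.1, ?_, ?_⟩
    · rw [sub_sub_cancel]; exact huU
    · rw [sub_sub_cancel]; exact (hp.2).symm
  have hPiinv : ∀ u ∈ Pi, x + y - (x + y - u) = u := fun u _ => sub_sub_cancel _ _
  have hPine : ∀ u ∈ Pi, x + y - u ≠ u := fun u hu => ((mem_filter.1 hu).2).2
  by_cases hmF : m ≤ Phi.card
  · obtain ⟨D, hD, hDcard⟩ := exists_subset_card_eq hmF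
    refine ⟨D, fun v hv => mem_of_mem_filter v (hD hv), hDcard, ?_⟩
    intro u hu hιU
    have hfree := (mem_filter.1 (hD hu)).2
    have : x + y - u = u := by tauto
    rw [this]; exact hu
  · push_neg at hmF
    have hboth : ∃ b, b ≤ Phi.card ∧ b ≤ m ∧ Even (m - b) ∧ m - b ≤ Pi.card := by
      rcases Nat.even_or_odd (m - Phi.card) with he | ho
      · exact ⟨Phi.card, le_refl _, by omega, he, by omega⟩
      · have hPhi1 : 1 ≤ Phi.card := by
          by_contra h0
          push_neg at h0
          have hPhi0 : Phi.card = 0 := by omega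
          rcases hside with ⟨u, hu, hfree⟩ | hEvenm
          · have huPhi : u ∈ Phi := mem_filter.2 ⟨hu, hfree⟩
            have := card_pos.2 ⟨u, huPhi⟩
            omega
          · have : Odd m := by
              have := ho
              rw [hPhi0, Nat.sub_zero] at this
              exact this
            exact (Nat.not_even_iff_odd.2 this) hEvenm
        refine ⟨Phi.card - 1, by omega, by omega, ?_, by omega⟩
        have heq : m - (Phi.card - 1) = (m - Phi.card) + 1 := by omega
        rw [heq]
        exact Odd.add_one ho
    obtain ⟨b, hbPhi, hbm, hbeven, hbPi⟩ := hboth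
    obtain ⟨Phi', hPhi'sub, hPhi'card⟩ := exists_subset_card_eq hbPhi
    obtain ⟨al, hal⟩ := hbeven
    obtain ⟨Q, hQPi, hQcard, hQmem⟩ := pair_select (fun u => x + y - u) al Pi hPimem hPiinv hPine
      (by omega)
    have hdisj : Disjoint Phi' Q := by
      rw [disjoint_left]
      intro v hv hvQ
      have h1 := (mem_filter.1 (hPhi'sub hv)).2
      have h2 := (mem_filter.1 (hQPi hvQ)).2
      exact h1 h2
    refine ⟨Phi' ∪ Q, ?_, ?_, ?_⟩
    · apply union_subset
      · exact fun v hv => mem_of_mem_filter v (hPhi'sub hv)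
      · exact fun v hv => mem_of_mem_filter v (hQPi hv)
    · rw [card_union_of_disjoint hdisj, hPhi'card, hQcard]
      omega
    · intro u hu hιU
      rcases mem_union.1 hu with h | h
      · have hfree := (mem_filter.1 (hPhi'sub h)).2
        have : x + y - u = u := by tauto
        rw [this]
        exact mem_union_left _ h
      · exact mem_union_right _ (hQmem u h)

/-- Extraction of the elementary 2-group structure. -/
lemma extraction {A : Finset G} (hA : 3 ≤ A.card)
    (H0 : ∀ x ∈ A, ∀ y ∈ A, x ≠ y → ∀ u ∈ A, u ≠ x → u ≠ y →
      (x + y - u ∈ A ∧ x + y - u ≠ x ∧ x + y - u ≠ y ∧ x + y - u ≠ u)) :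
    ∃ (a0 : G) (B : Finset G), A = B.image (fun z => a0 + z) ∧ (0 : G) ∈ B ∧
      (∀ u ∈ B, ∀ v ∈ B, u + v ∈ B) ∧ (∀ u ∈ B, u + u = 0) ∧ B.card = A.card := by
  classical
  obtain ⟨a0, ha0⟩ : A.Nonempty := card_pos.1 (by omega)
  set B := A.image (fun z => z - a0) with hB
  have hBcard : B.card = A.card := by
    rw [hB]
    apply card_image_of_injective
    intro z1 z2 h
    have := congrArg (fun t => t + a0) h
    simpa using this
  have hmem : ∀ w : G, w ∈ B ↔ a0 + w ∈ A := by
    intro w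
    rw [hB, mem_image]
    constructor
    · rintro ⟨z, hz, rfl⟩
      have : a0 + (z - a0) = z := by abel
      rw [this]; exact hz
    · intro h
      exact ⟨a0 + w, h, by abel⟩
  have h0B : (0 : G) ∈ B := (hmem 0).2 (by simpa using ha0)
  have HB : ∀ u ∈ B, ∀ v ∈ B, ∀ w ∈ B, u ≠ v → w ≠ u → w ≠ v →
      (u + v - w ∈ B ∧ u + v - w ≠ u ∧ u + v - w ≠ v ∧ u + v - w ≠ w) := by
    intro u hu v hv w hw huv hwu hwv
    have hne1 : a0 + u ≠ a0 + v := fun h => huv (by simpa using h)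
    have hne2 : a0 + w ≠ a0 + u := fun h => hwu (by simpa using h)
    have hne3 : a0 + w ≠ a0 + v := fun h => hwv (by simpa using h)
    have := H0 (a0 + u) ((hmem u).1 hu) (a0 + v) ((hmem v).1 hv) hne1
      (a0 + w) ((hmem w).1 hw) hne2 hne3
    have harith : (a0 + u) + (a0 + v) - (a0 + w) = a0 + (u + v - w) := by abel
    rw [harith] at this
    refine ⟨(hmem _).2 this.1, ?_, ?_, ?_⟩
    · intro h; exact this.2.1 (by rw [h])
    · intro h; exact this.2.2.1 (by rw [h])
    · intro h; exact this.2.2.2 (by rw [h])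
  have C1 : ∀ u ∈ B, ∀ v ∈ B, u ≠ 0 → v ≠ 0 → u ≠ v → (u + v ∈ B ∧ u + v ≠ 0) := by
    intro u hu v hv hu0 hv0 huv
    have := HB u hu v hv 0 h0B huv (fun h => hu0 h.symm) (fun h => hv0 h.symm)
    rw [sub_zero] at this
    exact ⟨this.1, this.2.2.2⟩
  have C2 : ∀ y ∈ B, y ≠ 0 → ∀ x ∈ B, x ≠ 0 → x ≠ y → (x - y ∈ B ∧ x - y ≠ 0 ∧ x - y ≠ y) := by
    intro y hy hy0 x hx hx0 hxy
    set s := (B.erase 0).erase y with hs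
    have hmemS : ∀ v, v ∈ s ↔ v ∈ B ∧ v ≠ 0 ∧ v ≠ y := by
      intro v; rw [hs, mem_erase, mem_erase]; tauto
    have himg : s.image (· + y) ⊆ s := by
      intro w hw
      obtain ⟨z, hz, rfl⟩ := mem_image.1 hw
      obtain ⟨hzB, hz0, hzy⟩ := (hmemS z).1 hz
      have hc := C1 z hzB y hy hz0 hy0 hzy
      refine (hmemS _).2 ⟨hc.1, hc.2, ?_⟩
      intro h
      apply hz0
      have := congrArg (fun t => t - y) h
      simpa using this
    have hcard : s.card ≤ (s.image (· + y)).card := by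
      rw [card_image_of_injective _ (add_left_injective y)]
    have heq : s.image (· + y) = s := eq_of_subset_of_card_le himg hcard
    have hxs : x ∈ s := (hmemS x).2 ⟨hx, hx0, hxy⟩
    rw [← heq] at hxs
    obtain ⟨z, hz, hzx⟩ := mem_image.1 hxs
    obtain ⟨hzB, hz0, hzy⟩ := (hmemS z).1 hz
    have hxyz : x - y = z := by
      rw [← hzx]
      abel
    rw [hxyz]
    exact ⟨hzB, hz0, hzy⟩
  have C3 : ∀ x ∈ B, ∀ y ∈ B, x ≠ 0 → y ≠ 0 → x ≠ y → x + x = y + y := by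
    intro x hx y hy hx0 hy0 hxy
    have h1 := C2 y hy hy0 x hx hx0 hxy
    have h2 := C2 x hx hx0 y hy hy0 (Ne.symm hxy)
    by_contra hne
    have hd : x - y ≠ y - x := by
      intro h
      apply hne
      have h0 : (x - y) - (y - x) = 0 := by rw [h, sub_self]
      have h1' : (x - y) - (y - x) = (x + x) - (y + y) := by abel
      rw [h1'] at h0
      exact sub_eq_zero.1 h0
    have := C1 _ h1.1 _ h2.1 h1.2.1 h2.2.1 hd
    exact this.2 (by abel)
  have C4 : ∀ x ∈ B, x + x = 0 := by
    intro x hx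
    by_cases hx0 : x = 0
    · rw [hx0, add_zero]
    · have hne : ((B.erase 0).erase x).Nonempty := by
        apply card_pos.1
        have hxB0 : x ∈ B.erase 0 := mem_erase.2 ⟨hx0, hx⟩
        rw [card_erase_of_mem hxB0, card_erase_of_mem h0B]
        omega
      obtain ⟨y, hy⟩ := hne
      have hyprop : y ≠ x ∧ y ≠ 0 ∧ y ∈ B := by
        rw [mem_erase, mem_erase] at hy
        tauto
      obtain ⟨hyx, hy0, hyB⟩ := hyprop
      have hz := HB x hx y hyB 0 h0B (Ne.symm hyx) (fun h => hx0 h.symm) (fun h => hy0 h.symm)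
      rw [sub_zero] at hz
      obtain ⟨hzB, hzx, hzy, hz0⟩ := hz
      have e1 := C3 x hx y hyB hx0 hy0 (Ne.symm hyx)
      have e2 := C3 (x + y) hzB x hx hz0 hx0 hzx
      have e3 : (x + x) + (y + y) = x + x := by
        calc (x + x) + (y + y) = (x + y) + (x + y) := by abel
          _ = x + x := e2
      have hyy : y + y = 0 := by
        have h' : (x + x) + (y + y) = (x + x) + 0 := by rw [add_zero]; exact e3
        exact add_left_cancel h'
      rw [e1, hyy]
  have haddB : ∀ u ∈ B, ∀ v ∈ B, u + v ∈ B := by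
    intro u hu v hv
    by_cases huv : u = v
    · rw [huv, C4 v hv]; exact h0B
    · by_cases hu0 : u = 0
      · rw [hu0, zero_add]; exact hv
      · by_cases hv0 : v = 0
        · rw [hv0, add_zero]; exact hu
        · exact (C1 u hu v hv hu0 hv0 huv).1
  have hAB : A = B.image (fun z => a0 + z) := by
    ext z
    rw [mem_image]
    constructor
    · intro hz
      refine ⟨z - a0, ?_, by abel⟩
      rw [hmem]
      have : a0 + (z - a0) = z := by abel
      rw [this]; exact hz
    · rintro ⟨w, hw, rfl⟩
      exact (hmem w).1 hw
  exact ⟨a0, B, hAB, h0B, haddB, C4, hBcard⟩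

/-- In an elementary 2-group (given as a closed finset), every element is a sum of `k`
distinct elements, provided `3 ≤ k` and `2 * k ≤ |B|`. -/
lemma greedy {B : Finset G} {k : ℕ} (h0 : (0 : G) ∈ B)
    (hadd : ∀ u ∈ B, ∀ v ∈ B, u + v ∈ B) (h2 : ∀ u ∈ B, u + u = 0)
    (hk3 : 3 ≤ k) (hkn : 2 * k ≤ B.card) :
    ∀ x ∈ B, x ∈ nSum k B := by
  intro x hx
  classical
  have hsumB : ∀ T : Finset G, T ⊆ B → T.sum id ∈ B := by
    intro T hT
    exact Finset.sum_induction id (· ∈ B) (fun a b ha hb => hadd a ha b hb) h0 (fun u hu => hT hu)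
  obtain ⟨T0, hT0B, hT0card⟩ := Finset.exists_subset_card_eq (show k - 2 ≤ B.card by omega)
  obtain ⟨T, hTB, hTcard, hTsum⟩ : ∃ T, T ⊆ B ∧ T.card = k - 2 ∧ T.sum id ≠ x := by
    by_cases h : T0.sum id = x
    · have hT0ne : T0.Nonempty := card_pos.1 (by omega)
      obtain ⟨t, ht⟩ := hT0ne
      have hBT0 : (B \ T0).Nonempty := by
        apply card_pos.1
        rw [card_sdiff_of_subset hT0B]
        omega
      obtain ⟨t', ht'⟩ := hBT0
      obtain ⟨ht'B, ht'T0⟩ := mem_sdiff.1 ht'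
      have ht'e : t' ∉ T0.erase t := fun hh => ht'T0 (mem_of_mem_erase hh)
      refine ⟨insert t' (T0.erase t), ?_, ?_, ?_⟩
      · exact insert_subset ht'B ((erase_subset _ _).trans hT0B)
      · rw [card_insert_of_notMem ht'e, card_erase_of_mem ht]
        omega
      · rw [sum_insert ht'e, Finset.sum_erase_eq_sub ht, h]
        simp only [id_eq]
        intro hcon
        apply ht'T0
        have h0' : (t' + (x - t)) - x = 0 := by rw [hcon, sub_self]
        have h1' : (t' + (x - t)) - x = t' - t := by abel
        rw [h1'] at h0'
        rw [sub_eq_zero.1 h0']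
        exact ht
    · exact ⟨T0, hT0B, hT0card, h⟩
  set s := T.sum id with hs
  have hsB : s ∈ B := hsumB T hTB
  set excl := T ∪ T.image (fun u => x + s + u) with hexcl
  have hexclcard : excl.card ≤ 2 * (k - 2) := by
    refine le_trans (card_union_le _ _) ?_
    have := card_image_le (s := T) (f := fun u => x + s + u)
    omega
  have hBe : (B \ excl).Nonempty := by
    apply card_pos.1
    have h1 := le_card_sdiff excl B
    omega
  obtain ⟨e, he⟩ := hBe
  obtain ⟨heB, heX⟩ := mem_sdiff.1 he
  set d := x + s + e with hd
  have hdB : d ∈ B := hadd _ (hadd x hx s hsB) e heB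
  have hde : d ≠ e := by
    intro h
    apply hTsum
    have h0' : d - e = 0 := by rw [h, sub_self]
    have h1' : d - e = x + s := by rw [hd]; abel
    rw [h1'] at h0'
    have hss := h2 s hsB
    have : x - s = 0 := by
      have : (x + s) + (s + s) - (s + s) - (s + s) = x - s := by abel
      rw [← this, h0', hss]
      abel
    exact (sub_eq_zero.1 this).symm
  have hdT : d ∉ T := by
    intro hdT
    apply heX
    refine mem_union_right _ (mem_image.2 ⟨d, hdT, ?_⟩)
    have hxx := h2 x hx
    have hss := h2 s hsB
    have : x + s + d = (x + x) + (s + s) + e := by rw [hd]; abel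
    rw [this, hxx, hss]
    abel
  have heT : e ∉ T := fun h => heX (mem_union_left _ h)
  have heI : e ∉ insert d T := by
    rw [mem_insert]
    rintro (h | h)
    · exact hde h.symm
    · exact heT h
  refine mem_nSum.2 ⟨insert e (insert d T), ?_, ?_, ?_⟩
  · intro v hv
    rcases mem_insert.1 hv with rfl | hv
    · exact heB
    rcases mem_insert.1 hv with rfl | hv
    · exact hdB
    · exact hTB hv
  · rw [card_insert_of_notMem heI, card_insert_of_notMem hdT, hTcard]
    omega
  · rw [sum_insert heI, sum_insert hdT, ← hs]
    simp only [id_eq]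
    have hxx := h2 x hx
    have hss := h2 s hsB
    have hee := h2 e heB
    calc e + (d + s) = x + (e + e) + (s + s) := by rw [hd]; abel
      _ = x := by rw [hee, hss]; abel

/-- Translation: `nSum k (a + A) = k • a + nSum k A`. -/
lemma nSum_image_add (a : G) (A : Finset G) (k : ℕ) :
    nSum k (A.image (fun z => a + z)) = (nSum k A).image (fun z => k • a + z) := by
  classical
  ext w
  rw [mem_nSum, mem_image]
  constructor
  · rintro ⟨S, hSsub, hScard, rfl⟩
    have hinj : Function.Injective (fun v : G => -a + v) := add_right_injective (-a)
    refine ⟨(S.image (fun v => -a + v)).sum id, mem_nSum.2 ⟨S.image (fun v => -a + v), ?_, ?_, rfl⟩, ?_⟩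
    · intro v hv
      obtain ⟨u, hu, rfl⟩ := mem_image.1 hv
      obtain ⟨z, hz, rfl⟩ := mem_image.1 (hSsub hu)
      have : -a + (a + z) = z := by abel
      rw [this]; exact hz
    · rw [card_image_of_injective _ hinj, hScard]
    · rw [Finset.sum_image (fun u _ v _ h => hinj h)]
      simp only [id_eq]
      rw [Finset.sum_add_distrib, Finset.sum_const, hScard]
      have h2 : k • a + k • (-a) = 0 := by
        rw [← smul_add]
        simp
      rw [← add_assoc, h2, zero_add]
  · rintro ⟨z, hz, rfl⟩
    obtain ⟨T, hT, hTcard, rfl⟩ := mem_nSum.1 hz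
    have hinj : Function.Injective (fun v : G => a + v) := add_right_injective a
    refine ⟨T.image (fun v => a + v), image_subset_image hT, ?_, ?_⟩
    · rw [card_image_of_injective _ hinj, hTcard]
    · rw [Finset.sum_image (fun u _ v _ h => hinj h)]
      simp only [id_eq]
      rw [Finset.sum_add_distrib, Finset.sum_const, hTcard]

/-- Reflection: `|nSum (n - k) A| = |nSum k A|`. -/
lemma nSum_card_compl (A : Finset G) (k : ℕ) (hk : k ≤ A.card) :
    (nSum (A.card - k) A).card = (nSum k A).card := by
  classical
  have himg : nSum (A.card - k) A = (nSum k A).image (fun z => A.sum id - z) := by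
    ext w
    rw [mem_nSum, mem_image]
    constructor
    · rintro ⟨S, hS, hScard, rfl⟩
      refine ⟨(A \ S).sum id, mem_nSum.2 ⟨A \ S, sdiff_subset, ?_, rfl⟩, ?_⟩
      · rw [card_sdiff_of_subset hS, hScard]
        omega
      · rw [Finset.sum_sdiff_eq_sub hS]
        abel
    · rintro ⟨z, hz, rfl⟩
      obtain ⟨T, hT, hTcard, rfl⟩ := mem_nSum.1 hz
      refine ⟨A \ T, sdiff_subset, ?_, ?_⟩
      · rw [card_sdiff_of_subset hT, hTcard]
      · rw [Finset.sum_sdiff_eq_sub hT]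
  rw [himg]
  apply card_image_of_injective
  intro z1 z2 h
  have h' : A.sum id - z1 = A.sum id - z2 := h
  have h0 : (A.sum id - z1) - (A.sum id - z2) = 0 := by rw [h', sub_self]
  have h1 : (A.sum id - z1) - (A.sum id - z2) = z2 - z1 := by abel
  rw [h1] at h0
  exact (sub_eq_zero.1 h0).symm

lemma main_half {A : Finset G} {k : ℕ} (hk2 : 2 ≤ k) (hkn : k + 2 ≤ A.card)
    (hhalf : 2 * k ≤ A.card)
    (hexc : ¬((k = 2 ∨ k = A.card - 2) ∧ Is2Coset A)) :
    A.card ≤ (nSum k A).card := by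
  classical
  by_contra hlt
  push_neg at hlt
  have key : ∀ x ∈ A, ∀ y ∈ A, x ≠ y →
      ¬((∃ u ∈ A \ {x, y}, ¬(x + y - u ∈ A \ {x, y} ∧ x + y - u ≠ u)) ∨ Even (k - 1)) := by
    intro x hx y hy hxy hside
    obtain ⟨D, hDU, hDcard, hDclosed⟩ := exists_D hx hy hxy (m := k - 1) (by omega) hside
    have hyD : y ∉ D := by
      intro h
      have := hDU h
      rw [mem_sdiff] at this
      exact this.2 (by simp)
    have hxD : x ∉ D := by
      intro h
      have := hDU h
      rw [mem_sdiff] at this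
      exact this.2 (by simp)
    set C := insert y D with hC
    have hCA : C ⊆ A := by
      rw [hC]
      exact insert_subset hy (hDU.trans sdiff_subset)
    have hCk : C.card = k := by
      rw [hC, card_insert_of_notMem hyD, hDcard]
      omega
    have hxC : x ∉ C := by
      rw [hC, mem_insert]
      rintro (h | h)
      · exact hxy h
      · exact hxD h
    have hyC : y ∈ C := mem_insert_self _ _
    have huniq : ∀ b' ∈ A, b' ∉ C → ∀ c' ∈ C, b' + c' = x + y → b' = x ∧ c' = y := by
      intro b' hb' hbC c' hc' heq
      rcases mem_insert.1 hc' with rfl | hcD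
      · refine ⟨?_, rfl⟩
        have h0 : (b' + c') - (x + c') = 0 := by rw [heq]; abel
        have h1 : (b' + c') - (x + c') = b' - x := by abel
        rw [h1] at h0
        exact sub_eq_zero.1 h0
      · exfalso
        have hb'val : b' = x + y - c' := eq_sub_of_add_eq heq
        have hb'x : b' ≠ x := by
          intro h
          rw [h] at heq
          have hcy : c' = y := add_left_cancel heq
          exact hyD (hcy ▸ hcD)
        have hb'y : b' ≠ y := fun h => hbC (h ▸ hyC)
        have hb'U : b' ∈ A \ {x, y} := mem_sdiff.2 ⟨hb', by simp [hb'x, hb'y]⟩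
        have hmemD : x + y - c' ∈ D := hDclosed c' hcD (hb'val ▸ hb'U)
        exact hbC (mem_insert_of_mem (hb'val ▸ hmemD))
    exact absurd (swap_bound hCA hCk hx hxC hyC huniq) (by omega)
  obtain ⟨x, hx, y, hy, hxy⟩ := Finset.one_lt_card.1 (show 1 < A.card by omega)
  have hodd : ¬ Even (k - 1) := fun h => key x hx y hy hxy (Or.inr h)
  have H0' : ∀ x ∈ A, ∀ y ∈ A, x ≠ y → ∀ u ∈ A \ {x, y},
      x + y - u ∈ A \ {x, y} ∧ x + y - u ≠ u := by
    intro x' hx' y' hy' hxy' u hu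
    by_contra h
    exact key x' hx' y' hy' hxy' (Or.inl ⟨u, hu, h⟩)
  have H0 : ∀ x ∈ A, ∀ y ∈ A, x ≠ y → ∀ u ∈ A, u ≠ x → u ≠ y →
      (x + y - u ∈ A ∧ x + y - u ≠ x ∧ x + y - u ≠ y ∧ x + y - u ≠ u) := by
    intro x' hx' y' hy' hxy' u hu hux huy
    have huU : u ∈ A \ {x', y'} := mem_sdiff.2 ⟨hu, by simp [hux, huy]⟩
    obtain ⟨h1, h2⟩ := H0' x' hx' y' hy' hxy' u huU
    obtain ⟨h1A, h1n⟩ := mem_sdiff.1 h1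
    simp only [mem_insert, mem_singleton] at h1n
    push_neg at h1n
    exact ⟨h1A, h1n.1, h1n.2, h2⟩
  obtain ⟨a0, B, hAB, h0B, haddB, h2B, hBcard⟩ := extraction (by omega) H0
  have h2co : Is2Coset A := by
    refine ⟨{ carrier := ↑B
              zero_mem' := by exact_mod_cast h0B
              add_mem' := ?_
              neg_mem' := ?_ }, a0, ?_, ?_⟩
    · intro a b ha hb
      exact_mod_cast haddB a (by exact_mod_cast ha) b (by exact_mod_cast hb)
    · intro a ha
      have haB : a ∈ B := by exact_mod_cast ha
      have hnn : -a = a := neg_eq_of_add_eq_zero_left (h2B a haB)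
      show -a ∈ (↑B : Set G)
      rw [hnn]
      exact ha
    · intro z hz
      exact h2B z (by exact_mod_cast hz)
    · rw [hAB, coe_image]
      ext z
      simp only [Set.mem_image, Set.mem_vadd_set, vadd_eq_add, Finset.mem_coe]
      constructor
      · rintro ⟨w, hw, rfl⟩; exact ⟨w, hw, rfl⟩
      · rintro ⟨w, hw, rfl⟩; exact ⟨w, hw, rfl⟩
  have hknot : k ≠ 2 ∧ k ≠ A.card - 2 := by
    by_contra h
    apply hexc
    refine ⟨?_, h2co⟩
    tauto
  have hk3 : 3 ≤ k := by omega
  have hBsub : B ⊆ nSum k B := fun v hv => greedy h0B haddB h2B hk3 (by omega) v hv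
  have hcard2 : (nSum k A).card = (nSum k B).card := by
    rw [hAB, nSum_image_add]
    exact card_image_of_injective _ (add_right_injective _)
  have hfin := card_le_card hBsub
  omega

end Helpers

theorem stmt11 {G : Type*} [AddCommGroup G] [DecidableEq G] (A : Finset G) (k : ℕ)
    (hk2 : 2 ≤ k) (hk : k ≤ A.card - 2)
    (hexc : ¬ ((k = 2 ∨ k = A.card - 2) ∧ Is2Coset A)) :
    A.card ≤ (nSum k A).card := by
  classical
  have hn : k + 2 ≤ A.card := by omega
  by_cases hhalf : 2 * k ≤ A.card
  · exact main_half hk2 hn hhalf hexc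
  · push_neg at hhalf
    have hk2' : 2 ≤ A.card - k := by omega
    have hn' : (A.card - k) + 2 ≤ A.card := by omega
    have hhalf' : 2 * (A.card - k) ≤ A.card := by omega
    have hexc' : ¬((A.card - k = 2 ∨ A.card - k = A.card - 2) ∧ Is2Coset A) := by
      rintro ⟨h1, h2⟩
      apply hexc
      refine ⟨?_, h2⟩
      rcases h1 with h1 | h1
      · right; omega
      · left; omega
    have hmain := main_half hk2' hn' hhalf' hexc'
    rwa [nSum_card_compl A k (by omega)] at hmain
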